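/- Let Y₁, …, Y_M (M ≥ 1) be independent, identically distributed real random variables whose common law μ is atomless, has cumulative distribution function F, finite first moment μ_Y := E[Y], and is such that x ↦ x·F(x) is μ-integrable, with C(F) := E[Y·F(Y)]. Then the plug-in estimator based on the empirical CDF satisfies E[ (1/M²) · Σ_{i=1}^M Σ_{j=1}^M Y_i · 1_{Y_j ≤ Y_i} ] = C(F) + (1/M)·(μ_Y − C(F)); in particular its bias relative to C(F) equals (μ_Y − C(F))/M. -/

import Mathlib

open MeasureTheory

/-- The plug-in (empirical-CDF) estimator of the CDF term `C(F) = E[Y·F(Y)]` satisfies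
`E[(1/M²)·Σᵢ Σⱼ Yᵢ·1_{Yⱼ ≤ Yᵢ}] = C(F) + (1/M)·(E[Y] − C(F))`, i.e.
its bias equals `(E[Y] − C(F))/M`. -/
theorem plugin_estimator_bias
    {Ω : Type*} [MeasurableSpace Ω] (P : Measure Ω) [IsProbabilityMeasure P]
    (M : ℕ) (hM : 1 ≤ M)
    (Y : Fin M → Ω → ℝ) (hYm : ∀ i, Measurable (Y i))
    (hIndep : ProbabilityTheory.iIndepFun Y P)
    (μ : Measure ℝ) (hmap : ∀ i, P.map (Y i) = μ)
    (hAtomless : ∀ x : ℝ, μ {x} = 0)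
    (F : ℝ → ℝ) (hF : ∀ t, F t = (μ (Set.Iic t)).toReal)
    (hInt : Integrable id μ)
    (hInt2 : Integrable (fun x => x * F x) μ) :
    (∫ ω, (1 / (M : ℝ) ^ 2) * ∑ i : Fin M, ∑ j : Fin M,
        Y i ω * (if Y j ω ≤ Y i ω then (1 : ℝ) else 0) ∂P) =
      (∫ x, x * F x ∂μ) + (1 / (M : ℝ)) * ((∫ x, x ∂μ) - ∫ x, x * F x ∂μ) := by
  have hμprob : IsProbabilityMeasure μ := by
    rw [← hmap ⟨0, hM⟩]
    exact Measure.isProbabilityMeasure_map (hYm _).aemeasurable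
  set C : ℝ := ∫ x, x * F x ∂μ with hC
  have hfm : Measurable (fun p : ℝ × ℝ => p.1 * (if p.2 ≤ p.1 then (1:ℝ) else 0)) := by
    exact measurable_fst.mul
      (Measurable.ite (measurableSet_le measurable_snd measurable_fst)
        measurable_const measurable_const)
  have hYint : ∀ i, Integrable (Y i) P := by
    intro i
    have h1 : Integrable id (P.map (Y i)) := by rw [hmap i]; exact hInt
    have := (integrable_map_measure aestronglyMeasurable_id (hYm i).aemeasurable).mp h1
    simpa using this
  have hterm : ∀ i j, Integrable (fun ω => Y i ω * (if Y j ω ≤ Y i ω then (1:ℝ) else 0)) P := by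
    intro i j
    refine (hYint i).mono ?_ ?_
    · exact ((hYm i).mul (Measurable.ite (measurableSet_le (hYm j) (hYm i))
        measurable_const measurable_const)).aestronglyMeasurable
    · filter_upwards with ω
      rw [Real.norm_eq_abs, Real.norm_eq_abs, abs_mul]
      split <;> simp [abs_nonneg]
  have hdiag : ∀ i : Fin M,
      (∫ ω, Y i ω * (if Y i ω ≤ Y i ω then (1:ℝ) else 0) ∂P) = ∫ x, x ∂μ := by
    intro i
    simp only [le_refl, if_true, mul_one]
    rw [← hmap i]
    simpa using
      (integral_map (φ := Y i) (f := fun x : ℝ => x) (hYm i).aemeasurable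
        aestronglyMeasurable_id).symm
  have hinner : ∀ x : ℝ, (∫ y, x * (if y ≤ x then (1:ℝ) else 0) ∂μ) = x * F x := by
    intro x
    rw [integral_const_mul]
    have h1 : (fun y => if y ≤ x then (1:ℝ) else 0)
        = Set.indicator (Set.Iic x) (fun _ => (1:ℝ)) := by
      ext y; simp [Set.indicator_apply, Set.mem_Iic]
    rw [h1, integral_indicator_const (1:ℝ) measurableSet_Iic, hF x]
    simp [Measure.real]
  have hoff : ∀ i j : Fin M, i ≠ j →
      (∫ ω, Y i ω * (if Y j ω ≤ Y i ω then (1:ℝ) else 0) ∂P) = C := by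
    intro i j hij
    have hind : ProbabilityTheory.IndepFun (Y i) (Y j) P := hIndep.indepFun hij
    have hjoint : P.map (fun ω => (Y i ω, Y j ω)) = μ.prod μ := by
      rw [(ProbabilityTheory.indepFun_iff_map_prod_eq_prod_map_map
        (hYm i).aemeasurable (hYm j).aemeasurable).mp hind, hmap i, hmap j]
    have h1 : (∫ ω, Y i ω * (if Y j ω ≤ Y i ω then (1:ℝ) else 0) ∂P)
        = ∫ p : ℝ × ℝ, p.1 * (if p.2 ≤ p.1 then (1:ℝ) else 0) ∂(μ.prod μ) := by
      rw [← hjoint,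
        integral_map ((hYm i).prodMk (hYm j)).aemeasurable hfm.aestronglyMeasurable]
    have hfst : Integrable (fun p : ℝ × ℝ => p.1) (μ.prod μ) := by
      have h2 : Integrable id ((μ.prod μ).map Prod.fst) := by
        rw [← Measure.fst, Measure.fst_prod]; exact hInt
      have := (integrable_map_measure aestronglyMeasurable_id
        measurable_fst.aemeasurable).mp h2
      simpa using this
    have hfi : Integrable (fun p : ℝ × ℝ => p.1 * (if p.2 ≤ p.1 then (1:ℝ) else 0))
        (μ.prod μ) := by
      refine hfst.mono hfm.aestronglyMeasurable ?_
      filter_upwards with p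
      rw [Real.norm_eq_abs, Real.norm_eq_abs, abs_mul]
      split <;> simp [abs_nonneg]
    rw [h1, MeasureTheory.integral_prod _ hfi]
    calc (∫ x, ∫ y, x * (if y ≤ x then (1:ℝ) else 0) ∂μ ∂μ)
        = ∫ x, x * F x ∂μ :=
          integral_congr_ae (Filter.Eventually.of_forall fun x => hinner x)
      _ = C := rfl
  have hswap : (∫ ω, ∑ i : Fin M, ∑ j : Fin M,
      Y i ω * (if Y j ω ≤ Y i ω then (1:ℝ) else 0) ∂P)
      = ∑ i : Fin M, ∑ j : Fin M,
        ∫ ω, Y i ω * (if Y j ω ≤ Y i ω then (1:ℝ) else 0) ∂P := by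
    rw [integral_finset_sum _ (fun i _ => integrable_finset_sum _ (fun j _ => hterm i j))]
    exact Finset.sum_congr rfl fun i _ => integral_finset_sum _ (fun j _ => hterm i j)
  have hsum : ∀ i : Fin M, (∑ j : Fin M,
      ∫ ω, Y i ω * (if Y j ω ≤ Y i ω then (1:ℝ) else 0) ∂P)
      = (∫ x, x ∂μ) + ((M:ℝ) - 1) * C := by
    intro i
    rw [← Finset.add_sum_erase _ _ (Finset.mem_univ i), hdiag i]
    congr 1
    rw [Finset.sum_congr rfl (fun j hj => hoff i j (Finset.ne_of_mem_erase hj).symm),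
      Finset.sum_const, Finset.card_erase_of_mem (Finset.mem_univ i), Finset.card_univ,
      Fintype.card_fin, nsmul_eq_mul, Nat.cast_sub hM, Nat.cast_one]
  have hMne : (M:ℝ) ≠ 0 := by
    exact_mod_cast Nat.one_le_iff_ne_zero.mp hM
  rw [integral_const_mul, hswap]
  rw [Finset.sum_congr rfl (fun i _ => hsum i), Finset.sum_const, Finset.card_univ,
    Fintype.card_fin, nsmul_eq_mul]
  field_simp
  ring
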